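/- Let k, r, L be positive integers with L dividing k, and set n_i = k/L for each i. Then the average repair bandwidth ratio of data nodes, namely (1/(k^2 r)) * [ (k(L-1) + (r-L+1)(k/L) + 2(L-1)(r-L+1)) * (k/L) + \sum_{i=1}^{L-1} (k i + (r-i)(k/L) + (r-i)) * (k/L) ], equals L/(2r) + 1/L - 3/(2 L r) + 1/(L^2 r) + ( -(5/2) L^2 + 3 L r + (9/2) L - 3 r - 2 ) / (k L r), as an identity of real numbers. -/

import Mathlib

lemma sum_Icc_id_real (m : ℕ) :
    ∑ i ∈ Finset.Icc 1 m, (i : ℝ) = m * (m + 1) / 2 := by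
  induction m with
  | zero => simp
  | succ p ih =>
    rw [Finset.sum_Icc_succ_top (by omega), ih]
    push_cast; ring

lemma sum_linear (m : ℕ) (A B : ℝ) :
    ∑ i ∈ Finset.Icc 1 m, ((i : ℝ) * A + B)
      = (m * (m + 1) / 2) * A + m * B := by
  rw [Finset.sum_add_distrib, ← Finset.sum_mul, sum_Icc_id_real,
    Finset.sum_const, Nat.card_Icc]
  simp

/-- Average repair bandwidth ratio of data nodes of the conjugate-piggybacking
code `C(n,k,L)` when `L` divides `k` (so that every group has `k/L` nodes). -/
theorem data_node_repair_ratio (k r L : ℕ) (hk : 0 < k) (hr : 0 < r) (hL : 0 < L)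
    (hdvd : L ∣ k) :
    (1 / ((k : ℝ) ^ 2 * r)) *
      (((k : ℝ) * ((L : ℝ) - 1) + ((r : ℝ) - (L : ℝ) + 1) * ((k : ℝ) / (L : ℝ))
          + 2 * ((L : ℝ) - 1) * ((r : ℝ) - (L : ℝ) + 1)) * ((k : ℝ) / (L : ℝ))
        + ∑ i ∈ Finset.Icc 1 (L - 1),
            ((k : ℝ) * (i : ℝ) + ((r : ℝ) - (i : ℝ)) * ((k : ℝ) / (L : ℝ))
              + ((r : ℝ) - (i : ℝ))) * ((k : ℝ) / (L : ℝ)))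
    = (L : ℝ) / (2 * r) + 1 / (L : ℝ) - 3 / (2 * (L : ℝ) * r) + 1 / ((L : ℝ) ^ 2 * r)
      + (-(5 / 2) * (L : ℝ) ^ 2 + 3 * (L : ℝ) * (r : ℝ) + (9 / 2) * (L : ℝ)
          - 3 * (r : ℝ) - 2) / ((k : ℝ) * (L : ℝ) * (r : ℝ)) := by
  obtain ⟨n, rfl⟩ : ∃ n, L = n + 1 := ⟨L - 1, by omega⟩
  have hk0 : (k : ℝ) ≠ 0 := Nat.cast_ne_zero.mpr hk.ne'
  have hr0 : (r : ℝ) ≠ 0 := Nat.cast_ne_zero.mpr hr.ne'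
  have hn0 : (n : ℝ) + 1 ≠ 0 := by positivity
  have hL' : ((n + 1 : ℕ) : ℝ) = (n : ℝ) + 1 := by push_cast; ring
  simp only [Nat.add_sub_cancel, hL']
  have key : ∑ i ∈ Finset.Icc 1 n,
      ((k : ℝ) * (i : ℝ) + ((r : ℝ) - (i : ℝ)) * ((k : ℝ) / ((n : ℝ) + 1))
        + ((r : ℝ) - (i : ℝ))) * ((k : ℝ) / ((n : ℝ) + 1))
      = ∑ i ∈ Finset.Icc 1 n,
          ((i : ℝ) * (((k : ℝ) - (k : ℝ) / ((n : ℝ) + 1) - 1) * ((k : ℝ) / ((n : ℝ) + 1)))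
            + ((r : ℝ) * ((k : ℝ) / ((n : ℝ) + 1)) + (r : ℝ)) * ((k : ℝ) / ((n : ℝ) + 1))) :=
    Finset.sum_congr rfl fun i _ => by ring
  rw [key, sum_linear]
  field_simp
  ring
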